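/- Let T be a tree rooted at r with link set E, let a be a leaf incident to at least one link, and let x ≠ r be a vertex lying on the path from a to r. If some link of E incident to a covers the tree edge between x and its parent p(x), then every up-link up(a) of a covers the tree edge between x and p(x). -/

import Mathlib

open scoped Classical

/-- The set of tree edges lying on a path (necessarily the unique one in a tree)
between `u` and `v`. -/
def pathEdges {V : Type*} (T : SimpleGraph V) (u v : V) : Set (Sym2 V) :=
  {e | ∃ p : T.Walk u v, p.IsPath ∧ e ∈ p.edges}

/-- The set of vertices lying on a path between `u` and `v`. -/
def pathSupport {V : Type*} (T : SimpleGraph V) (u v : V) : Set V :=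
  {w | ∃ p : T.Walk u v, p.IsPath ∧ w ∈ p.support}

/-- The link `l` covers the tree edge `e` : `e` lies on the tree path between the
endpoints of `l`. -/
def Covers {V : Type*} (T : SimpleGraph V) (l e : Sym2 V) : Prop :=
  ∃ u v, l = s(u, v) ∧ e ∈ pathEdges T u v

/-- A set `F` of links covers the tree `T` (is feasible): every edge of `T` is covered
by some link of `F`. -/
def CoversTree {V : Type*} (T : SimpleGraph V) (F : Set (Sym2 V)) : Prop :=
  ∀ e ∈ T.edgeSet, ∃ l ∈ F, Covers T l e

/-- `x` belongs to the subtree `T_v` of `T` rooted at `r`: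
`v` lies on the tree path from `x` to the root `r`. -/
def InSubtree {V : Type*} (T : SimpleGraph V) (r v x : V) : Prop :=
  v ∈ pathSupport T x r

/-- A leaf is a vertex with exactly one neighbour (degree one). -/
def IsLeaf {V : Type*} (T : SimpleGraph V) (v : V) : Prop :=
  ∃! w, T.Adj v w

/-- `y` is the parent of `x` in the tree `T` rooted at `r`. -/
def IsParent {V : Type*} (T : SimpleGraph V) (r x y : V) : Prop :=
  T.Adj x y ∧ InSubtree T r y x

/-- `w` is the least common ancestor of `u` and `v` in the tree `T` rooted at `r`. -/
def IsLCA {V : Type*} (T : SimpleGraph V) (r u v w : V) : Prop :=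
  w ∈ pathSupport T u v ∧ w ∈ pathSupport T u r ∧ w ∈ pathSupport T v r

/-- The link `cd` is a shadow of the link `ab`: the tree path between `c` and `d` is a
strict subpath of the tree path between `a` and `b`. -/
def IsShadow {V : Type*} (T : SimpleGraph V) (c d a b : V) : Prop :=
  c ≠ d ∧ pathEdges T c d ⊂ pathEdges T a b

/-- The link set `E` is shadow-closed: every shadow of a link of `E` belongs to `E`. -/
def ShadowClosed {V : Type*} (T : SimpleGraph V) (E : Finset (Sym2 V)) : Prop :=
  ∀ a b c d, s(a, b) ∈ E → IsShadow T c d a b → s(c, d) ∈ E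

/-- `F ⊆ E` is a shadows-minimal feasible solution: it is a minimum-cardinality cover of
`T` among subsets of `E`, and replacing any link of `F` by one of its shadows renders it
infeasible. -/
def ShadowsMinimal {V : Type*} (T : SimpleGraph V) (E F : Finset (Sym2 V)) : Prop :=
  F ⊆ E ∧ CoversTree T ↑F ∧
    (∀ F' : Finset (Sym2 V), F' ⊆ E → CoversTree T ↑F' → F.card ≤ F'.card) ∧
    ∀ a b c d, s(a, b) ∈ F → IsShadow T c d a b →
      ¬ CoversTree T ↑(insert s(c, d) (F.erase s(a, b)))

/-- `deg_F(x)`: the number of links of `F` incident to `x`. -/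
noncomputable def degF {V : Type*} (F : Finset (Sym2 V)) (x : V) : ℕ :=
  (F.filter (fun e => x ∈ e)).card

/-- `s` is a stem with twin link `ab`: an internal vertex whose children are exactly the
two leaves `a` and `b`, with `ab ∈ E`. -/
def IsStem {V : Type*} (T : SimpleGraph V) (r : V) (E : Finset (Sym2 V)) (s a b : V) : Prop :=
  a ≠ b ∧ ¬ IsLeaf T s ∧ IsLeaf T a ∧ IsLeaf T b ∧
    IsParent T r a s ∧ IsParent T r b s ∧
    (∀ x, IsParent T r x s → x = a ∨ x = b) ∧ s(a, b) ∈ E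

/-- The subtree `T_v` is `x`-closed: every link of `E` incident to `x` has both endpoints
in `T_v`. -/
def XClosed {V : Type*} (T : SimpleGraph V) (r : V) (E : Finset (Sym2 V)) (v x : V) : Prop :=
  ∀ l ∈ E, x ∈ l → ∀ y ∈ l, InSubtree T r v y

/-- The subtree `T_v` is leaf-closed: it is `x`-closed for every leaf `x ∈ L_v`. -/
def LeafClosed {V : Type*} (T : SimpleGraph V) (r : V) (E : Finset (Sym2 V)) (v : V) : Prop :=
  ∀ x, IsLeaf T x → InSubtree T r v x → XClosed T r E v x

/-- The subtree `T_v` is minimally leaf-closed: it is leaf-closed and no subtree rooted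
at a strict descendant of `v` is leaf-closed. -/
def MinLeafClosed {V : Type*} (T : SimpleGraph V) (r : V) (E : Finset (Sym2 V)) (v : V) : Prop :=
  LeafClosed T r E v ∧ ∀ u, InSubtree T r v u → u ≠ v → ¬ LeafClosed T r E u

/-- `ax` is an up-link of the leaf `a`: a link of `E` incident to `a` whose least common
ancestor with `a` is closest to the root among all links of `E` incident to `a`. -/
def IsUpLink {V : Type*} (T : SimpleGraph V) (r : V) (E : Finset (Sym2 V)) (a x : V) : Prop :=
  s(a, x) ∈ E ∧ ∀ y w w', s(a, y) ∈ E → IsLCA T r a x w → IsLCA T r a y w' →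
    T.dist w r ≤ T.dist w' r

/-- A matching: a set of links (pairs of distinct vertices) no two of which share an
endpoint. -/
def IsMatching {V : Type*} (M : Finset (Sym2 V)) : Prop :=
  (∀ l ∈ M, ¬ l.IsDiag) ∧ ∀ l ∈ M, ∀ l' ∈ M, l ≠ l' → ∀ x, x ∈ l → x ∉ l'

section Aux

open SimpleGraph Walk

variable {V : Type*} {T : SimpleGraph V}

lemma path_unique (hT : T.IsTree) {u v : V} {p q : T.Walk u v}
    (hp : p.IsPath) (hq : q.IsPath) : p = q :=
  (hT.existsUnique_path u v).unique hp hq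

lemma path_length_eq_dist (hT : T.IsTree) {u v : V} {p : T.Walk u v}
    (hp : p.IsPath) : p.length = T.dist u v := by
  obtain ⟨q, hq, hql⟩ := hT.isConnected.exists_path_of_dist u v
  rw [path_unique hT hp hq, hql]

lemma junction {u v c : V} {p : T.Walk u v} (hp : p.IsPath) (h : c ∈ p.support) :
    ∀ s, s ∈ (p.takeUntil c h).support → s ∈ (p.dropUntil c h).support → s = c := by
  intro s hs1 hs2
  by_contra hne
  have hnd : ((p.takeUntil c h).support ++ (p.dropUntil c h).support.tail).Nodup := by
    rw [← Walk.support_append, Walk.take_spec]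
    exact hp.support_nodup
  have hdisj := (List.nodup_append'.mp hnd).2.2
  have hstail : s ∈ (p.dropUntil c h).support.tail := by
    have := Walk.support_eq_cons (p.dropUntil c h)
    rw [this] at hs2
    rcases List.mem_cons.mp hs2 with h' | h'
    · exact absurd h' hne
    · exact h'
  exact hdisj hs1 hstail

lemma mem_take_or_drop {u v c s : V} (p : T.Walk u v) (h : c ∈ p.support)
    (hs : s ∈ p.support) :
    s ∈ (p.takeUntil c h).support ∨ s ∈ (p.dropUntil c h).support := by
  rw [← Walk.take_spec p h, Walk.mem_support_append_iff] at hs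
  exact hs

lemma append_isPath {u m w : V} {p₁ : T.Walk u m} {p₂ : T.Walk m w}
    (h₁ : p₁.IsPath) (h₂ : p₂.IsPath)
    (hj : ∀ s, s ∈ p₁.support → s ∈ p₂.support → s = m) :
    (p₁.append p₂).IsPath := by
  rw [Walk.isPath_def, Walk.support_append]
  refine List.Nodup.append h₁.support_nodup h₂.support_nodup.tail ?_
  intro s hs1 hs2
  have hmem : s ∈ p₂.support := by
    rw [Walk.support_eq_cons p₂]
    exact List.mem_cons_of_mem _ hs2
  have hsm := hj s hs1 hmem
  subst hsm
  have hnd := h₂.support_nodup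
  rw [Walk.support_eq_cons p₂] at hnd
  exact (List.nodup_cons.mp hnd).1 hs2

lemma dist_anti (hT : T.IsTree) {c r v : V} {P : T.Walk c r} (hP : P.IsPath)
    (hv : v ∈ P.support) :
    T.dist v r ≤ T.dist c r ∧ (v ≠ c → T.dist v r < T.dist c r) := by
  have hlen : P.length = (P.takeUntil v hv).length + (P.dropUntil v hv).length := by
    rw [← Walk.length_append, Walk.take_spec]
  have h1 := path_length_eq_dist hT hP
  have h2 := path_length_eq_dist hT (hP.dropUntil hv)
  have h3 : (P.takeUntil v hv).length = 0 → c = v := Walk.eq_of_length_eq_zero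
  refine ⟨by omega, fun hne => ?_⟩
  have hne0 : (P.takeUntil v hv).length ≠ 0 := fun h0 => hne (h3 h0).symm
  omega

lemma dist_take (hT : T.IsTree) {b r u v : V} {q : T.Walk b r} (hq : q.IsPath)
    (hu : u ∈ q.support) (hv : v ∈ (q.takeUntil u hu).support) :
    T.dist u r ≤ T.dist v r ∧ (v ≠ u → T.dist u r < T.dist v r) := by
  have hQ1p : (q.takeUntil u hu).IsPath := hq.takeUntil hu
  have hW : (((q.takeUntil u hu).dropUntil v hv).append (q.dropUntil u hu)).IsPath := by
    refine append_isPath (hQ1p.dropUntil hv) (hq.dropUntil hu) ?_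
    intro s hs1 hs2
    exact junction hq hu s (Walk.support_dropUntil_subset _ hv hs1) hs2
  have h1 := path_length_eq_dist hT hW
  rw [Walk.length_append] at h1
  have h2 := path_length_eq_dist hT (hq.dropUntil hu)
  have h3 : ((q.takeUntil u hu).dropUntil v hv).length = 0 → v = u :=
    Walk.eq_of_length_eq_zero
  refine ⟨by omega, fun hne => ?_⟩
  have hne0 : ((q.takeUntil u hu).dropUntil v hv).length ≠ 0 := fun h0 => hne (h3 h0)
  omega

lemma mem_take_of_dist_le (hT : T.IsTree) {a r w w' : V} {p : T.Walk a r} (hp : p.IsPath)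
    (hw : w ∈ p.support) (hw' : w' ∈ p.support) (hd : T.dist w r ≤ T.dist w' r) :
    w' ∈ (p.takeUntil w hw).support := by
  rcases mem_take_or_drop p hw hw' with h | h
  · exact h
  · by_cases he : w' = w
    · subst he; exact Walk.end_mem_support _
    · have := (dist_anti hT (hp.dropUntil hw) h).2 he
      omega

lemma exists_lca (hT : T.IsTree) {a b r : V} (p : T.Walk a r) (hp : p.IsPath)
    (q : T.Walk b r) (hq : q.IsPath) :
    ∃ (w : V) (hwp : w ∈ p.support) (hwq : w ∈ q.support),
      (∀ v, v ∈ p.support → v ∈ q.support → v ∈ (p.dropUntil w hwp).support) ∧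
      ((p.takeUntil w hwp).append ((q.takeUntil w hwq).reverse)).IsPath := by
  classical
  obtain ⟨w, hwS, hmax⟩ := Finset.exists_max_image
    (p.support.toFinset ∩ q.support.toFinset) (fun v => T.dist v r)
    ⟨r, by simp [List.mem_toFinset]⟩
  rw [Finset.mem_inter, List.mem_toFinset, List.mem_toFinset] at hwS
  obtain ⟨hwp, hwq⟩ := hwS
  have hmin : ∀ v, v ∈ p.support → v ∈ q.support → v ∈ (p.dropUntil w hwp).support := by
    intro v hv1 hv2
    rcases mem_take_or_drop p hwp hv1 with h | h
    · by_cases he : v = w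
      · subst he; exact Walk.start_mem_support _
      · have h1 := (dist_take hT hp hwp h).2 he
        have h2 : T.dist v r ≤ T.dist w r := by
          have := hmax v (by rw [Finset.mem_inter, List.mem_toFinset, List.mem_toFinset]
                             exact ⟨hv1, hv2⟩)
          simpa using this
        omega
    · exact h
  refine ⟨w, hwp, hwq, hmin, ?_⟩
  refine append_isPath (hp.takeUntil hwp) ((hq.takeUntil hwq).reverse) ?_
  intro s hs1 hs2
  rw [Walk.support_reverse, List.mem_reverse] at hs2
  have hsq : s ∈ q.support := Walk.support_takeUntil_subset q hwq hs2
  have hsp : s ∈ p.support := Walk.support_takeUntil_subset p hwp hs1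
  exact junction hp hwp s hs1 (hmin s hsp hsq)

lemma sym2_mem_elim {l : Sym2 V} {a : V} (h : a ∈ l) : ∃ b, l = s(a, b) :=
  ⟨Sym2.Mem.other h, (Sym2.other_spec h).symm⟩

lemma pathEdges_comm {u v : V} {e : Sym2 V} (h : e ∈ pathEdges T u v) :
    e ∈ pathEdges T v u := by
  obtain ⟨p, hp, he⟩ := h
  exact ⟨p.reverse, hp.reverse, by rw [Walk.edges_reverse]; exact List.mem_reverse.mpr he⟩

end Aux

/-- let `a` be a leaf incident to some link and `x ≠ r` a vertex on the
path from `a` to the root with parent `y`. If some link of `E` incident to `a` covers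
the tree edge `xy`, then every up-link of `a` covers it. -/
theorem statement11 {V : Type*} [Fintype V] (T : SimpleGraph V) (hT : T.IsTree) (r : V)
    (hr : ¬ IsLeaf T r) (E : Finset (Sym2 V))
    (hlinks : ∀ l ∈ E, ¬ l.IsDiag)
    (a : V) (ha : IsLeaf T a) (haE : ∃ l ∈ E, a ∈ l)
    (x y : V) (hx : x ≠ r) (hxpath : x ∈ pathSupport T a r)
    (hpar : IsParent T r x y)
    (hcov : ∃ l ∈ E, a ∈ l ∧ Covers T l s(x, y)) :
    ∀ z, IsUpLink T r E a z → Covers T s(a, z) s(x, y) := by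
  classical
  intro z hz
  obtain ⟨p, hp, -⟩ := hT.existsUnique_path a r
  have hxp : x ∈ p.support := by
    obtain ⟨p', hp', hx'⟩ := hxpath
    rwa [path_unique hT hp' hp] at hx'
  obtain ⟨l, hlE, hal, u0, v0, hluv, hxyuv⟩ := hcov
  obtain ⟨b, hlab⟩ := sym2_mem_elim hal
  subst hlab
  have hab : s(a, b) ∈ E := hlE
  have hxyab : s(x, y) ∈ pathEdges T a b := by
    rcases Sym2.eq_iff.mp hluv with ⟨h1, h2⟩ | ⟨h1, h2⟩
    · subst h1; subst h2; exact hxyuv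
    · subst h1; subst h2; exact pathEdges_comm hxyuv
  obtain ⟨q, hq, -⟩ := hT.existsUnique_path b r
  obtain ⟨qz, hqz, -⟩ := hT.existsUnique_path z r
  obtain ⟨w', hw'p, hw'q, hmin', hW'⟩ := exists_lca hT p hp q hq
  obtain ⟨w, hwp, hwqz, hminz, hWz⟩ := exists_lca hT p hp qz hqz
  have hlcab : IsLCA T r a b w' := by
    refine ⟨⟨_, hW', ?_⟩, ⟨p, hp, hw'p⟩, ⟨q, hq, hw'q⟩⟩
    rw [SimpleGraph.Walk.mem_support_append_iff]
    exact Or.inl (SimpleGraph.Walk.end_mem_support _)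
  have hlcaz : IsLCA T r a z w := by
    refine ⟨⟨_, hWz, ?_⟩, ⟨p, hp, hwp⟩, ⟨qz, hqz, hwqz⟩⟩
    rw [SimpleGraph.Walk.mem_support_append_iff]
    exact Or.inl (SimpleGraph.Walk.end_mem_support _)
  have hdist : T.dist w r ≤ T.dist w' r := hz.2 b w w' hab hlcaz hlcab
  -- facts about the edge s(x,y) on p
  have hPx : (p.dropUntil x hxp).IsPath := hp.dropUntil hxp
  have hyPx : y ∈ (p.dropUntil x hxp).support := by
    obtain ⟨P', hP', hy'⟩ := hpar.2
    rwa [path_unique hT hP' hPx] at hy'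
  have hxy : T.Adj x y := hpar.1
  have hxney : x ≠ y := hxy.ne
  have hdyx : T.dist y r < T.dist x r := (dist_anti hT hPx hyPx).2 (Ne.symm hxney)
  -- s(x,y) lies on the prefix of p up to w'
  have hkey : s(x, y) ∈ (p.takeUntil w' hw'p).edges := by
    obtain ⟨W0, hW0p, hW0e⟩ := hxyab
    rw [path_unique hT hW0p hW'] at hW0e
    rw [SimpleGraph.Walk.edges_append] at hW0e
    rcases List.mem_append.mp hW0e with h | h
    · exact h
    · exfalso
      rw [SimpleGraph.Walk.edges_reverse, List.mem_reverse] at h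
      have hy' : y ∈ (q.takeUntil w' hw'q).support :=
        SimpleGraph.Walk.snd_mem_support_of_mem_edges _ h
      have hx' : x ∈ (q.takeUntil w' hw'q).support :=
        SimpleGraph.Walk.fst_mem_support_of_mem_edges _ h
      have h1 : T.dist w' r ≤ T.dist y r := (dist_take hT hq hw'q hy').1
      have hxq : x ∈ q.support := SimpleGraph.Walk.support_takeUntil_subset _ hw'q hx'
      have h2 : x ∈ (p.dropUntil w' hw'p).support := hmin' x hxp hxq
      have h3 : T.dist x r ≤ T.dist w' r := (dist_anti hT (hp.dropUntil hw'p) h2).1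
      omega
  have hw'take : w' ∈ (p.takeUntil w hwp).support :=
    mem_take_of_dist_le hT hp hwp hw'p hdist
  have hsub : (p.takeUntil w' hw'p).edges ⊆ (p.takeUntil w hwp).edges := by
    have heq : (p.takeUntil w hwp).takeUntil w' hw'take = p.takeUntil w' hw'p :=
      path_unique hT ((hp.takeUntil hwp).takeUntil hw'take) (hp.takeUntil hw'p)
    rw [← heq]
    exact SimpleGraph.Walk.edges_takeUntil_subset _ hw'take
  refine ⟨a, z, rfl, _, hWz, ?_⟩
  rw [SimpleGraph.Walk.edges_append]
  exact List.mem_append.mpr (Or.inl (hsub hkey))
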